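/- Let C ⊆ F_2^n be a binary linear code with minimum distance at least 2t+1, let u > t and r be natural numbers, and let x, z be real numbers. For a vector w ∈ F_2^n and codeword c ∈ C, write a(w,c) = |{i : c_i = 1, w_i = 0}| and b(w,c) = |{i : c_i = 0, w_i = 1}|. Then Σ_{w : wt(w) = u} Σ_{c ∈ C : wt(c) = r, d(w,c) ≤ t} x^{a(w,c)} · z^{b(w,c)} = A_r · Σ_{(a,b)} C(r,a)·C(n−r,b)·x^a·z^b, where the inner sum on the right is over all pairs of natural numbers (a,b) with a + b ≤ t and u + a = r + b. (With x = 1−P_ca and z = 1−P_wa this gives the numerator of the miscorrection probability of bounded distance decoding aided by anchor bits.) -/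

import Mathlib

open Finset

section helpers
variable {n : ℕ} (c w : Fin n → ZMod 2)

private lemma disj_aux (p q : (Fin n → ZMod 2) → Fin n → Prop)
    [∀ w i, Decidable (p w i)] [∀ w i, Decidable (q w i)]
    (h : ∀ i, p w i → q w i → False) :
    Disjoint (univ.filter (fun i => p w i)) (univ.filter (fun i => q w i)) := by
  rw [disjoint_left]
  intro i hi hj
  simp only [mem_filter, mem_univ, true_and] at hi hj
  exact h i hi hj

lemma dist_eq : hammingDist w c =
    (univ.filter (fun i => c i = 1 ∧ w i = 0)).card +
    (univ.filter (fun i => c i = 0 ∧ w i = 1)).card := by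
  rw [hammingDist, ← card_union_of_disjoint]
  · congr 1
    ext i
    simp only [mem_filter, mem_union, mem_univ, true_and]
    have : ∀ a b : ZMod 2, a ≠ b ↔ (b = 1 ∧ a = 0) ∨ (b = 0 ∧ a = 1) := by decide
    exact this (w i) (c i)
  · exact disj_aux w (fun w' i => c i = 1 ∧ w' i = 0) (fun w' i => c i = 0 ∧ w' i = 1)
      (fun i h1 h2 => by rw [h1.1] at h2; exact one_ne_zero h2.1)

lemma norm_w_eq : hammingNorm w =
    (univ.filter (fun i => c i = 1 ∧ w i = 1)).card +
    (univ.filter (fun i => c i = 0 ∧ w i = 1)).card := by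
  rw [hammingNorm, ← card_union_of_disjoint]
  · congr 1
    ext i
    simp only [mem_filter, mem_union, mem_univ, true_and]
    have : ∀ a b : ZMod 2, a ≠ 0 ↔ (b = 1 ∧ a = 1) ∨ (b = 0 ∧ a = 1) := by decide
    exact this (w i) (c i)
  · exact disj_aux w (fun w' i => c i = 1 ∧ w' i = 1) (fun w' i => c i = 0 ∧ w' i = 1)
      (fun i h1 h2 => by rw [h1.1] at h2; exact one_ne_zero h2.1)

lemma norm_c_eq : hammingNorm c =
    (univ.filter (fun i => c i = 1 ∧ w i = 1)).card +
    (univ.filter (fun i => c i = 1 ∧ w i = 0)).card := by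
  rw [hammingNorm, ← card_union_of_disjoint]
  · congr 1
    ext i
    simp only [mem_filter, mem_union, mem_univ, true_and]
    have : ∀ a b : ZMod 2, a ≠ 0 ↔ (a = 1 ∧ b = 1) ∨ (a = 1 ∧ b = 0) := by decide
    exact this (c i) (w i)
  · exact disj_aux c (fun c i => c i = 1 ∧ w i = 1) (fun c i => c i = 1 ∧ w i = 0)
      (fun i h1 h2 => by rw [h1.2] at h2; exact one_ne_zero h2.2)

end helpers

section fiber
variable {n : ℕ}

def mkw (c : Fin n → ZMod 2) (A B : Finset (Fin n)) : Fin n → ZMod 2 :=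
  fun i => if c i = 1 then (if i ∈ A then 0 else 1) else (if i ∈ B then 1 else 0)

lemma mkw_A (c : Fin n → ZMod 2) (A B : Finset (Fin n))
    (hA : A ⊆ univ.filter (fun i => c i = 1)) :
    univ.filter (fun i => c i = 1 ∧ mkw c A B i = 0) = A := by
  ext i
  simp only [mem_filter, mem_univ, true_and]; simp only [mkw]
  by_cases hci : c i = 1
  · simp only [hci, if_true, true_and]
    by_cases hiA : i ∈ A <;> simp [hiA]
  · simp only [hci, if_false, false_and, false_iff]
    intro hiA
    exact hci ((mem_filter.mp (hA hiA)).2)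

lemma mkw_B (c : Fin n → ZMod 2) (A B : Finset (Fin n))
    (hB : B ⊆ univ.filter (fun i => c i = 0)) :
    univ.filter (fun i => c i = 0 ∧ mkw c A B i = 1) = B := by
  ext i
  simp only [mem_filter, mem_univ, true_and]; simp only [mkw]
  by_cases hci : c i = 1
  · simp only [hci, if_true]
    constructor
    · rintro ⟨h0, -⟩; exact absurd h0 (by decide)
    · intro hiB
      have h0 := (mem_filter.mp (hB hiB)).2
      rw [h0] at hci
      exact absurd hci (by decide)
  · simp only [hci, if_false]
    have hc0 : c i = 0 := by
      have : ∀ a : ZMod 2, ¬ a = 1 → a = 0 := by decide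
      exact this _ hci
    simp only [hc0, true_and]
    by_cases hiB : i ∈ B <;> simp [hiB]

lemma mkw_recover (c w : Fin n → ZMod 2) :
    mkw c (univ.filter (fun i => c i = 1 ∧ w i = 0))
          (univ.filter (fun i => c i = 0 ∧ w i = 1)) = w := by
  funext i
  simp only [mkw, mem_filter, mem_univ, true_and]
  by_cases hci : c i = 1
  · simp only [hci, true_and, if_true]
    by_cases hw : w i = 0
    · simp [hw]
    · have : w i = 1 := by
        have : ∀ a : ZMod 2, ¬ a = 0 → a = 1 := by decide
        exact this _ hw
      simp [hw, this]
  · have hc0 : c i = 0 := by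
      have : ∀ a : ZMod 2, ¬ a = 1 → a = 0 := by decide
      exact this _ hci
    simp only [hci, if_false, hc0, true_and]
    by_cases hw : w i = 1
    · simp [hw]
    · have : w i = 0 := by
        have : ∀ a : ZMod 2, ¬ a = 1 → a = 0 := by decide
        exact this _ hw
      simp [hw, this]

lemma fiber_card {r a b : ℕ} (c : Fin n → ZMod 2) (hc : hammingNorm c = r) :
    (univ.filter (fun w : Fin n → ZMod 2 =>
        (univ.filter (fun i => c i = 1 ∧ w i = 0)).card = a ∧
        (univ.filter (fun i => c i = 0 ∧ w i = 1)).card = b)).card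
      = r.choose a * (n - r).choose b := by
  have hsupp : (univ.filter (fun i => c i = 1)).card = r := by
    rw [← hc, hammingNorm]
    congr 1
    ext i
    have : ∀ a : ZMod 2, a = 1 ↔ a ≠ 0 := by decide
    simp only [mem_filter, this]
  have hco : (univ.filter (fun i => c i = 0)).card = n - r := by
    have h := card_filter_add_card_filter_not (s := (univ : Finset (Fin n)))
      (p := fun i => c i = 1)
    have heq : (univ.filter (fun i => ¬ c i = 1)) = (univ.filter (fun i => c i = 0)) := by
      ext i
      have : ∀ a : ZMod 2, ¬ a = 1 ↔ a = 0 := by decide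
      simp only [mem_filter, this]
    rw [heq, hsupp, card_univ, Fintype.card_fin] at h
    omega
  have hrhs : r.choose a * (n - r).choose b =
      ((univ.filter (fun i => c i = 1)).powersetCard a ×ˢ
        (univ.filter (fun i => c i = 0)).powersetCard b).card := by
    rw [card_product, card_powersetCard, card_powersetCard, hsupp, hco]
  rw [hrhs]
  apply card_bij' (i := fun w _ => (univ.filter (fun i => c i = 1 ∧ w i = 0),
      univ.filter (fun i => c i = 0 ∧ w i = 1)))
    (j := fun p _ => mkw c p.1 p.2)
  · intro w hw
    simp only [mem_filter, mem_univ, true_and] at hw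
    simp only [mem_product, mem_powersetCard]
    refine ⟨⟨?_, hw.1⟩, ?_, hw.2⟩
    · intro i hi; simp only [mem_filter, mem_univ, true_and] at hi ⊢; exact hi.1
    · intro i hi; simp only [mem_filter, mem_univ, true_and] at hi ⊢; exact hi.1
  · intro p hp
    simp only [mem_product, mem_powersetCard] at hp
    simp only [mem_filter, mem_univ, true_and]
    rw [mkw_A c p.1 p.2 hp.1.1, mkw_B c p.1 p.2 hp.2.1]
    exact ⟨hp.1.2, hp.2.2⟩
  · intro w _
    exact mkw_recover c w
  · intro p hp
    simp only [mem_product, mem_powersetCard] at hp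
    exact Prod.ext (mkw_A c p.1 p.2 hp.1.1) (mkw_B c p.1 p.2 hp.2.1)

end fiber

lemma inner_sum_aux {n t u r : ℕ} (x z : ℝ) (c : Fin n → ZMod 2) (hc : hammingNorm c = r) :
    ∑ w ∈ univ.filter (fun w : Fin n → ZMod 2 =>
        hammingNorm w = u ∧ hammingDist w c ≤ t),
      x ^ (univ.filter (fun i => c i = 1 ∧ w i = 0)).card *
        z ^ (univ.filter (fun i => c i = 0 ∧ w i = 1)).card
    = ∑ ab ∈ (range (t + 1) ×ˢ range (t + 1)).filter
        (fun ab => ab.1 + ab.2 ≤ t ∧ u + ab.1 = r + ab.2),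
        (r.choose ab.1 : ℝ) * ((n - r).choose ab.2 : ℝ) * x ^ ab.1 * z ^ ab.2 := by
  have key : ∀ w : Fin n → ZMod 2,
      hammingDist w c = (univ.filter (fun i => c i = 1 ∧ w i = 0)).card +
        (univ.filter (fun i => c i = 0 ∧ w i = 1)).card ∧
      hammingNorm w + (univ.filter (fun i => c i = 1 ∧ w i = 0)).card =
        r + (univ.filter (fun i => c i = 0 ∧ w i = 1)).card := by
    intro w
    refine ⟨dist_eq c w, ?_⟩
    have h1 := norm_w_eq c w
    have h2 := norm_c_eq c w
    omega
  rw [← Finset.sum_fiberwise_of_maps_to (t := (range (t + 1) ×ˢ range (t + 1)).filter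
        (fun ab => ab.1 + ab.2 ≤ t ∧ u + ab.1 = r + ab.2))
      (g := fun w : Fin n → ZMod 2 =>
        ((univ.filter (fun i => c i = 1 ∧ w i = 0)).card,
         (univ.filter (fun i => c i = 0 ∧ w i = 1)).card))
      (fun w hw => by
        simp only [mem_filter, mem_univ, true_and] at hw
        obtain ⟨hd, hn⟩ := key w
        simp only [mem_filter, mem_product, mem_range]
        omega)]
  refine Finset.sum_congr rfl fun ab hab => ?_
  simp only [mem_filter, mem_product, mem_range] at hab
  have hfib : ((univ.filter (fun w : Fin n → ZMod 2 =>
        hammingNorm w = u ∧ hammingDist w c ≤ t)).filter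
      (fun w => ((univ.filter (fun i => c i = 1 ∧ w i = 0)).card,
        (univ.filter (fun i => c i = 0 ∧ w i = 1)).card) = ab))
      = univ.filter (fun w : Fin n → ZMod 2 =>
          (univ.filter (fun i => c i = 1 ∧ w i = 0)).card = ab.1 ∧
          (univ.filter (fun i => c i = 0 ∧ w i = 1)).card = ab.2) := by
    ext w
    obtain ⟨hd, hn⟩ := key w
    simp only [mem_filter, mem_univ, true_and, Prod.mk.injEq, Prod.ext_iff]
    constructor
    · rintro ⟨-, h1, h2⟩; exact ⟨h1, h2⟩
    · rintro ⟨h1, h2⟩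
      refine ⟨⟨?_, ?_⟩, h1, h2⟩ <;> omega
  have hconst : ∑ w ∈ univ.filter (fun w : Fin n → ZMod 2 =>
          (univ.filter (fun i => c i = 1 ∧ w i = 0)).card = ab.1 ∧
          (univ.filter (fun i => c i = 0 ∧ w i = 1)).card = ab.2),
        x ^ (univ.filter (fun i => c i = 1 ∧ w i = 0)).card *
          z ^ (univ.filter (fun i => c i = 0 ∧ w i = 1)).card
      = ∑ _w ∈ univ.filter (fun w : Fin n → ZMod 2 =>
          (univ.filter (fun i => c i = 1 ∧ w i = 0)).card = ab.1 ∧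
          (univ.filter (fun i => c i = 0 ∧ w i = 1)).card = ab.2),
        x ^ ab.1 * z ^ ab.2 := by
    refine Finset.sum_congr rfl fun w hw => ?_
    simp only [mem_filter, mem_univ, true_and] at hw
    rw [hw.1, hw.2]
  rw [hfib, hconst, Finset.sum_const, fiber_card c hc, nsmul_eq_mul]
  push_cast
  ring


/-- For a binary linear code with minimum distance at least `2t+1`,
`u > t` and real numbers `x, z`:
`∑_{w : wt(w) = u} ∑_{c ∈ C : wt(c) = r, d(w,c) ≤ t} x^{a(w,c)} z^{b(w,c)}
  = A_r · ∑_{(a,b) : a+b ≤ t, u+a = r+b} C(r,a)·C(n−r,b)·x^a·z^b`,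
where `a(w,c) = |{i : c_i = 1, w_i = 0}|` and `b(w,c) = |{i : c_i = 0, w_i = 1}|`. -/
theorem bdd_anchor_weighted_count {n t : ℕ}
    (C : Submodule (ZMod 2) (Fin n → ZMod 2)) [DecidablePred (· ∈ C)]
    (hdmin : ∀ c ∈ C, c ≠ 0 → 2 * t + 1 ≤ hammingNorm c)
    (u r : ℕ) (hu : t < u) (x z : ℝ) :
    ∑ w ∈ Finset.univ.filter (fun w : Fin n → ZMod 2 => hammingNorm w = u),
      ∑ c ∈ Finset.univ.filter (fun c : Fin n → ZMod 2 =>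
          c ∈ C ∧ hammingNorm c = r ∧ hammingDist w c ≤ t),
        x ^ (Finset.univ.filter (fun i => c i = 1 ∧ w i = 0)).card *
          z ^ (Finset.univ.filter (fun i => c i = 0 ∧ w i = 1)).card =
      ((Finset.univ.filter
          (fun c : Fin n → ZMod 2 => c ∈ C ∧ hammingNorm c = r)).card : ℝ) *
        ∑ ab ∈ (Finset.range (t + 1) ×ˢ Finset.range (t + 1)).filter
            (fun ab => ab.1 + ab.2 ≤ t ∧ u + ab.1 = r + ab.2),
          (r.choose ab.1 : ℝ) * ((n - r).choose ab.2 : ℝ) *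
            x ^ ab.1 * z ^ ab.2 := by
  rw [Finset.sum_comm'
      (t' := Finset.univ.filter (fun c : Fin n → ZMod 2 => c ∈ C ∧ hammingNorm c = r))
      (s' := fun c => Finset.univ.filter (fun w : Fin n → ZMod 2 =>
        hammingNorm w = u ∧ hammingDist w c ≤ t))
      (h := fun w c => by
        simp only [mem_filter, mem_univ, true_and]
        tauto)]
  rw [Finset.sum_congr rfl (fun c hc => inner_sum_aux (t := t) (u := u) x z c
      (mem_filter.mp hc).2.2), Finset.sum_const, nsmul_eq_mul]
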